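/- Let m ∈ ℕ, let 𝓗 be a Hardy field, and let f, g ∈ 𝓗. Assume that f satisfies either |f(t)| → ∞ or f(t) → 0 as t → ∞, and that g satisfies either |g(t)| → ∞ or g(t) → 0 as t → ∞. Assume further that |f(t)| ≺ |g(t)| ≺ |f(t)|·log^m(t) and |log(|f(t)|)| ≪ log₂(t). Then |f'(t)/f(t)| / (log₂ t)² ≺ |g'(t)/g(t)| ≺ |f'(t)/f(t)| · (log₂ t)². -/

import Mathlib

open Filter Real
open scoped Classical

noncomputable section

/-- `Prec f g` formalizes `f(t) ≺ g(t)`: `g(t)/f(t) → ∞` as `t → ∞`. -/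
def Prec (f g : ℝ → ℝ) : Prop := Tendsto (fun t => g t / f t) atTop atTop

/-- `Ll f g` formalizes `f(t) ≪ g(t)`: there are `C > 0` and `t₀ ≥ 1` with
`f(t) ≤ C·g(t)` for all `t ≥ t₀`. -/
def Ll (f g : ℝ → ℝ) : Prop := ∃ C : ℝ, 0 < C ∧ ∃ t₀ : ℝ, 1 ≤ t₀ ∧ ∀ t ≥ t₀, f t ≤ C * g t

/-- the iterated logarithm `log₂(t) = log log t`. -/
def log2 (t : ℝ) : ℝ := Real.log (Real.log t)

/-- the iterated logarithm `log₄(t) = log log log log t`. -/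
def log4 (t : ℝ) : ℝ := Real.log (Real.log (Real.log (Real.log t)))

/-- A Hardy field: a set of (germs at `+∞` of) eventually smooth real functions,
invariant under germ equivalence at `+∞`, forming a subring of the ring of germs that is
a field and is closed under differentiation. -/
structure HardyField where
  carrier : Set (ℝ → ℝ)
  germ_closed : ∀ f g : ℝ → ℝ, f =ᶠ[atTop] g → f ∈ carrier → g ∈ carrier
  eventually_smooth : ∀ f ∈ carrier, ∀ᶠ t in atTop, ∀ n : ℕ, ContDiffAt ℝ n f t
  zero_mem : (0 : ℝ → ℝ) ∈ carrier
  one_mem : (1 : ℝ → ℝ) ∈ carrier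
  add_mem : ∀ f ∈ carrier, ∀ g ∈ carrier, f + g ∈ carrier
  neg_mem : ∀ f ∈ carrier, -f ∈ carrier
  mul_mem : ∀ f ∈ carrier, ∀ g ∈ carrier, f * g ∈ carrier
  inv_mem : ∀ f ∈ carrier, ¬ f =ᶠ[atTop] (0 : ℝ → ℝ) →
    ∃ g ∈ carrier, f * g =ᶠ[atTop] (1 : ℝ → ℝ)
  deriv_mem : ∀ f ∈ carrier, deriv f ∈ carrier

/-- Condition (A): `log(t)·log₄(t) ≺ f(t)`. -/
def CondA (f : ℝ → ℝ) : Prop := Prec (fun t => Real.log t * log4 t) f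

/-- Condition (B): there is `j ∈ ℕ`, `j ≥ 1`, with `t^(j-1) ≺ f(t) ≺ t^j`. -/
def CondB (f : ℝ → ℝ) : Prop :=
  ∃ j : ℕ, 1 ≤ j ∧ Prec (fun t => t ^ (j - 1)) f ∧ Prec f (fun t => t ^ j)

/-- The natural density of `A ⊆ ℕ` exists and equals `L`. -/
def natDensityIs (A : Set ℕ) (L : ℝ) : Prop :=
  Tendsto (fun N : ℕ => (((Finset.Icc 1 N).filter fun n => n ∈ A).card : ℝ) / N)
    atTop (nhds L)

/-- `e(x) = e^{2πix}`. -/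
def e (x : ℝ) : ℂ := Complex.exp (2 * Real.pi * Complex.I * x)

/-- The value `ζ(m) = ∑_{n ≥ 1} 1/n^m` of the Riemann zeta function at a natural number `m`. -/
def zetaNat (m : ℕ) : ℝ := ∑' n : ℕ, (1 : ℝ) / ((n : ℝ) + 1) ^ m


open Set
namespace Stmt5Aux

/-! ### Basic calculus helpers -/

/-- An eventually-continuous, eventually-nonvanishing function has eventually constant sign. -/
lemma sign_const {h : ℝ → ℝ} (hc : ∀ᶠ t in atTop, ContinuousAt h t)
    (hne : ∀ᶠ t in atTop, h t ≠ 0) :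
    (∀ᶠ t in atTop, 0 < h t) ∨ (∀ᶠ t in atTop, h t < 0) := by
  obtain ⟨T, hT⟩ := (hc.and hne).exists_forall_of_atTop
  have key : ∀ s ≥ T, ∀ u ≥ T, 0 < h s → 0 < h u := by
    intro s hs u hu hhs
    by_contra hno
    have hu0 : h u < 0 := lt_of_le_of_ne (not_lt.mp hno) ((hT u hu).2)
    rcases le_total s u with hsu | hus
    · have hcont : ContinuousOn h (Icc s u) := fun x hx =>
        ((hT x (le_trans hs hx.1)).1).continuousWithinAt
      have := intermediate_value_Icc' hsu hcont (a := s) (b := u)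
      have h0 : (0:ℝ) ∈ Icc (h u) (h s) := ⟨hu0.le, hhs.le⟩
      obtain ⟨x, hx, hx0⟩ := this h0
      exact (hT x (le_trans hs hx.1)).2 hx0
    · have hcont : ContinuousOn h (Icc u s) := fun x hx =>
        ((hT x (le_trans hu hx.1)).1).continuousWithinAt
      have := intermediate_value_Icc hus hcont (a := u) (b := s)
      have h0 : (0:ℝ) ∈ Icc (h u) (h s) := ⟨hu0.le, hhs.le⟩
      obtain ⟨x, hx, hx0⟩ := this h0
      exact (hT x (le_trans hu hx.1)).2 hx0
  rcases lt_or_lt_iff_ne.mpr (hT T le_rfl).2 with hneg | hpos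
  · right
    filter_upwards [eventually_ge_atTop T] with u hu
    by_contra hno
    have : 0 < h u := lt_of_le_of_ne (not_lt.mp hno) (Ne.symm (hT u hu).2)
    exact absurd (key u hu T le_rfl this) (not_lt.mpr hneg.le)
  · left
    filter_upwards [eventually_ge_atTop T] with u hu
    exact key T le_rfl u hu hpos

/-- A function with vanishing derivative on a tail is constant there. -/
lemma const_of_deriv_zero_tail {h : ℝ → ℝ} {T : ℝ}
    (hd : ∀ t ≥ T, HasDerivAt h 0 t) : ∀ t ≥ T, h t = h T := by
  intro t ht
  rcases eq_or_lt_of_le ht with rfl | hlt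
  · rfl
  have hcont : ContinuousOn h (Icc T t) := fun x hx =>
    (hd x hx.1).continuousAt.continuousWithinAt
  obtain ⟨c, hc, hc'⟩ := exists_hasDerivAt_eq_slope h (fun _ => (0:ℝ)) hlt hcont
    (fun x hx => hd x hx.1.le)
  have : h t - h T = 0 := by
    have h2 : (h t - h T) / (t - T) = 0 := hc'.symm
    rcases div_eq_zero_iff.mp h2 with h1 | h2
    · exact h1
    · exact absurd h2 (sub_ne_zero.mpr (ne_of_gt hlt))
  linarith

lemma strictMonoOn_tail {h d : ℝ → ℝ} {T : ℝ}
    (hd : ∀ t ≥ T, HasDerivAt h (d t) t) (hpos : ∀ t ≥ T, 0 < d t) :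
    StrictMonoOn h (Ici T) := by
  apply strictMonoOn_of_deriv_pos (convex_Ici T)
  · exact fun x hx => (hd x hx).continuousAt.continuousWithinAt
  · intro x hx
    rw [interior_Ici] at hx
    rw [(hd x hx.le).deriv]
    exact hpos x hx.le

lemma strictAntiOn_tail {h d : ℝ → ℝ} {T : ℝ}
    (hd : ∀ t ≥ T, HasDerivAt h (d t) t) (hneg : ∀ t ≥ T, d t < 0) :
    StrictAntiOn h (Ici T) := by
  apply strictAntiOn_of_deriv_neg (convex_Ici T)
  · exact fun x hx => (hd x hx).continuousAt.continuousWithinAt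
  · intro x hx
    rw [interior_Ici] at hx
    rw [(hd x hx.le).deriv]
    exact hneg x hx.le

lemma eventuallyEq_deriv_atTop {p q : ℝ → ℝ} (h : p =ᶠ[atTop] q) :
    deriv p =ᶠ[atTop] deriv q := by
  obtain ⟨T, hT⟩ := h.exists_forall_of_atTop
  filter_upwards [eventually_gt_atTop T] with t ht
  have : p =ᶠ[nhds t] q := by
    filter_upwards [Ioi_mem_nhds ht] with x hx
    exact hT x (le_of_lt hx)
  exact this.deriv_eq

/-- Dichotomy for a function monotone on a tail. -/
lemma mono_dichotomy {h : ℝ → ℝ} {T : ℝ}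
    (hm : MonotoneOn h (Ici T) ∨ AntitoneOn h (Ici T)) :
    Tendsto (fun t => |h t|) atTop atTop ∨ ∃ B, ∀ᶠ t in atTop, |h t| ≤ B := by
  have main : ∀ h : ℝ → ℝ, MonotoneOn h (Ici T) →
      Tendsto (fun t => |h t|) atTop atTop ∨ ∃ B, ∀ᶠ t in atTop, |h t| ≤ B := by
    intro h hm
    by_cases hb : ∀ M : ℝ, ∃ t, T ≤ t ∧ M ≤ h t
    · left
      rw [tendsto_atTop]
      intro M
      obtain ⟨t₀, ht₀, hMt₀⟩ := hb M
      filter_upwards [eventually_ge_atTop t₀] with t ht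
      calc M ≤ h t₀ := hMt₀
        _ ≤ h t := hm (mem_Ici.mpr ht₀) (mem_Ici.mpr (le_trans ht₀ ht)) ht
        _ ≤ |h t| := le_abs_self _
    · right
      push_neg at hb
      obtain ⟨M, hM⟩ := hb
      refine ⟨max M |h T|, ?_⟩
      filter_upwards [eventually_ge_atTop T] with t ht
      have h1 : h t < M := hM t ht
      have h2 : h T ≤ h t := hm (mem_Ici.mpr le_rfl) (mem_Ici.mpr ht) ht
      rw [abs_le]
      constructor
      · have : -|h T| ≤ h T := neg_abs_le _
        calc -(max M |h T|) ≤ -|h T| := neg_le_neg (le_max_right _ _)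
          _ ≤ h T := neg_abs_le _
          _ ≤ h t := h2
      · exact le_trans h1.le (le_max_left _ _)
  rcases hm with hmono | hanti
  · exact main h hmono
  · have := main (fun t => -h t) (fun x hx y hy hxy => neg_le_neg (hanti hx hy hxy))
    simpa only [abs_neg] using this


/-! ### The multi-scale block contradiction lemma -/

/-- the scale points `exp (exp (2^k))`. -/
def tk (k : ℕ) : ℝ := Real.exp (Real.exp ((2:ℝ) ^ k))

lemma tk_log2 (k : ℕ) : Real.log (Real.log (tk k)) = (2:ℝ) ^ k := by
  simp [tk, Real.log_exp]

lemma tk_mono : StrictMono tk := by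
  intro a b hab
  have h1 : (2:ℝ) ^ a < 2 ^ b := by
    apply pow_lt_pow_right₀ one_lt_two hab
  exact Real.exp_lt_exp.mpr (Real.exp_lt_exp.mpr h1)

lemma tk_ge_three (k : ℕ) : 3 ≤ tk k := by
  have h1 : (1:ℝ) ≤ (2:ℝ) ^ k := one_le_pow₀ one_le_two
  have h2 : Real.exp 1 ≤ Real.exp ((2:ℝ)^k) := Real.exp_le_exp.mpr h1
  have h3 : (2:ℝ) ≤ Real.exp 1 := by
    have := Real.add_one_le_exp 1
    linarith
  have h4 : Real.exp 2 ≤ tk k := by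
    apply Real.exp_le_exp.mpr
    linarith
  have h5 : (3:ℝ) ≤ Real.exp 2 := by
    have h6 := Real.add_one_le_exp 2
    linarith
  linarith

lemma tk_tendsto : Tendsto tk atTop atTop := by
  apply Real.tendsto_exp_atTop.comp
  apply Real.tendsto_exp_atTop.comp
  exact tendsto_pow_atTop_atTop_of_one_lt one_lt_two

/-- loglog is monotone on `[3, ∞)`. -/
lemma loglog_mono {s t : ℝ} (hs : 3 ≤ s) (hst : s ≤ t) :
    Real.log (Real.log s) ≤ Real.log (Real.log t) := by
  have hlogs : (1:ℝ) < Real.log s := by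
    have : Real.exp 1 < 3 := by
      have h3 : Real.exp 1 < Real.exp 2 := Real.exp_lt_exp.mpr one_lt_two
      have h6 := Real.add_one_le_exp 1
      nlinarith [Real.exp_one_lt_d9]
    calc (1:ℝ) = Real.log (Real.exp 1) := (Real.log_exp 1).symm
      _ < Real.log 3 := Real.log_lt_log (Real.exp_pos 1) this
      _ ≤ Real.log s := Real.log_le_log (by norm_num) hs
  exact Real.log_le_log (by linarith) (Real.log_le_log (by linarith) hst)

/-- Main contradiction: if `X' ≥ c·Y'·(loglog)²` on a tail, `X ≤ C·loglog`, `Y' ≥ 0`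
and `Y → ∞`, we get a contradiction. -/
lemma block_contra {X Y dX dY : ℝ → ℝ} {c C T : ℝ} (hc : 0 < c)
    (hX : ∀ t ≥ T, HasDerivAt X (dX t) t)
    (hY : ∀ t ≥ T, HasDerivAt Y (dY t) t)
    (hdY : ∀ t ≥ T, 0 ≤ dY t)
    (hcomp : ∀ t ≥ T, c * (dY t * Real.log (Real.log t) ^ 2) ≤ dX t)
    (hXb : ∀ t ≥ T, X t ≤ C * Real.log (Real.log t))
    (hYtop : Tendsto Y atTop atTop) : False := by
  obtain ⟨k₀, hk₀⟩ := (tk_tendsto.eventually (eventually_ge_atTop T)).exists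
  -- basic facts on the tail
  have htkT : ∀ k ≥ k₀, T ≤ tk k := fun k hk =>
    le_trans hk₀ (StrictMono.monotone tk_mono hk)
  have hL2 : ∀ k ≥ k₀, ∀ t, tk k ≤ t → (2:ℝ)^k ≤ Real.log (Real.log t) := by
    intro k hk t ht
    rw [← tk_log2 k]
    exact loglog_mono (tk_ge_three k) ht
  have hdXnn : ∀ t ≥ tk k₀, 0 ≤ dX t := by
    intro t ht
    have hT' : T ≤ t := le_trans (htkT k₀ le_rfl) ht
    have h2 : 0 ≤ Real.log (Real.log t) := by
      have := hL2 k₀ le_rfl t ht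
      have : (0:ℝ) < 2 ^ k₀ := by positivity
      linarith [hL2 k₀ le_rfl t ht]
    calc (0:ℝ) ≤ c * (dY t * Real.log (Real.log t) ^ 2) := by
          have := hdY t hT'
          positivity
      _ ≤ dX t := hcomp t hT'
  -- X is monotone on the tail
  have hXmono : MonotoneOn X (Ici (tk k₀)) := by
    apply monotoneOn_of_deriv_nonneg (convex_Ici _)
    · exact fun x hx => (hX x (le_trans (htkT k₀ le_rfl) hx)).continuousAt.continuousWithinAt
    · intro x hx
      rw [interior_Ici] at hx
      exact ((hX x (le_trans (htkT k₀ le_rfl) hx.le)).differentiableAt).differentiableWithinAt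
    · intro x hx
      rw [interior_Ici] at hx
      rw [(hX x (le_trans (htkT k₀ le_rfl) hx.le)).deriv]
      exact hdXnn x hx.le
  -- the per-block estimate
  set D : ℝ := (2 * |C| + |X (tk k₀)|) / c with hD
  have hDnn : 0 ≤ D := by
    apply div_nonneg _ hc.le
    positivity
  have hblock : ∀ k ≥ k₀, Y (tk (k+1)) - Y (tk k) ≤ D * (1/2)^k := by
    intro k hk
    set ck : ℝ := c * ((2:ℝ)^k)^2 with hck
    have hckpos : 0 < ck := by positivity
    -- W = X - ck • Y is monotone on the block
    have hW : MonotoneOn (fun t => X t - ck * Y t) (Icc (tk k) (tk (k+1))) := by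
      apply monotoneOn_of_deriv_nonneg (convex_Icc _ _)
      · intro x hx
        exact (((hX x (le_trans (htkT k hk) hx.1)).sub
          ((hY x (le_trans (htkT k hk) hx.1)).const_mul ck)).continuousAt).continuousWithinAt
      · intro x hx
        rw [interior_Icc] at hx
        exact ((hX x (le_trans (htkT k hk) hx.1.le)).sub
          ((hY x (le_trans (htkT k hk) hx.1.le)).const_mul ck)).differentiableAt.differentiableWithinAt
      · intro x hx
        rw [interior_Icc] at hx
        have hTx : T ≤ x := le_trans (htkT k hk) hx.1.le
        rw [HasDerivAt.deriv (f := fun t => X t - ck * Y t) ((hX x hTx).sub ((hY x hTx).const_mul ck))]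
        have h2 : (2:ℝ)^k ≤ Real.log (Real.log x) := hL2 k hk x hx.1.le
        have h2' : ((2:ℝ)^k)^2 ≤ Real.log (Real.log x) ^ 2 := by
          apply pow_le_pow_left₀ (by positivity) h2
        have hdy := hdY x hTx
        have h5 : c * dY x * ((2:ℝ)^k)^2 ≤ c * dY x * Real.log (Real.log x)^2 :=
          mul_le_mul_of_nonneg_left h2' (mul_nonneg hc.le hdy)
        have h1 : ck * dY x ≤ c * (dY x * Real.log (Real.log x) ^ 2) := by
          rw [hck]
          calc c * ((2:ℝ)^k) ^ 2 * dY x = c * dY x * ((2:ℝ)^k)^2 := by ring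
            _ ≤ c * dY x * Real.log (Real.log x)^2 := h5
            _ = c * (dY x * Real.log (Real.log x) ^ 2) := by ring
        have h3 := hcomp x hTx
        linarith
    have hstep := hW (left_mem_Icc.mpr (tk_mono (Nat.lt_succ_self k)).le)
      (right_mem_Icc.mpr (tk_mono (Nat.lt_succ_self k)).le)
      (tk_mono (Nat.lt_succ_self k)).le
    -- so ck * (Y(tk(k+1)) - Y(tk k)) ≤ X(tk(k+1)) - X(tk k)
    have hstep' : X (tk k) - ck * Y (tk k) ≤ X (tk (k+1)) - ck * Y (tk (k+1)) := hstep
    have hXup : X (tk (k+1)) ≤ C * 2^(k+1) := by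
      have h := hXb (tk (k+1)) (htkT (k+1) (le_trans hk (Nat.le_succ k)))
      rw [tk_log2 (k+1)] at h
      exact h
    have hXlow : X (tk k₀) ≤ X (tk k) :=
      hXmono (self_mem_Ici) (mem_Ici.mpr (StrictMono.monotone tk_mono hk))
        (StrictMono.monotone tk_mono hk)
    have hkey : ck * (Y (tk (k+1)) - Y (tk k)) ≤ 2 * |C| * 2^k + |X (tk k₀)| := by
      have h2 : C * 2^(k+1) ≤ 2 * |C| * 2^k := by
        calc C * 2^(k+1) ≤ |C| * 2^(k+1) :=
              mul_le_mul_of_nonneg_right (le_abs_self C) (by positivity)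
          _ = 2 * |C| * 2^k := by ring
      have h3 : -(X (tk k₀)) ≤ |X (tk k₀)| := neg_le_abs _
      linarith
    -- divide by ck = c * 4^k
    have h4 : Y (tk (k+1)) - Y (tk k) ≤ (2 * |C| * 2^k + |X (tk k₀)|) / ck :=
      (le_div_iff₀ hckpos).mpr (by linarith [hkey, mul_comm ck (Y (tk (k+1)) - Y (tk k))])
    calc Y (tk (k+1)) - Y (tk k) ≤ (2 * |C| * 2^k + |X (tk k₀)|) / ck := h4
      _ ≤ D * (1/2)^k := by
        rw [hck, hD, div_le_iff₀ hckpos]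
        have hp : (0:ℝ) < 2^k := by positivity
        have hXa : 0 ≤ |X (tk k₀)| := abs_nonneg _
        have hCa : 0 ≤ |C| := abs_nonneg _
        have e1 : (2 * |C| + |X (tk k₀)|) / c * (1 / 2) ^ k * (c * ((2:ℝ) ^ k) ^ 2)
            = (2 * |C| + |X (tk k₀)|) * 2^k := by
          field_simp
          have h12 : (1/2:ℝ)^k * 2^k = 1 := by rw [← mul_pow]; norm_num
          linear_combination (|C| * 2 + |X (tk k₀)|) * h12
        rw [e1]
        have hp1 : (1:ℝ) ≤ 2^k := one_le_pow₀ one_le_two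
        nlinarith
  -- telescope
  have htel : ∀ N : ℕ, Y (tk (k₀ + N)) ≤ Y (tk k₀) + 2 * D := by
    intro N
    have h1 : Y (tk (k₀ + N)) ≤ Y (tk k₀) + D * ∑ j ∈ Finset.range N, (1/2:ℝ)^j := by
      induction N with
      | zero => simp
      | succ n ih =>
        have h2 := hblock (k₀ + n) (Nat.le_add_right _ _)
        rw [Finset.sum_range_succ]
        have h3 : ((1:ℝ)/2)^(k₀+n) ≤ (1/2)^n :=
          pow_le_pow_of_le_one (by norm_num) (by norm_num) (Nat.le_add_left n k₀)
        have h4 : D * (1/2)^(k₀+n) ≤ D * (1/2)^n := by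
          apply mul_le_mul_of_nonneg_left h3 hDnn
        have : k₀ + (n+1) = (k₀ + n) + 1 := by omega
        rw [this]
        have h5 : Y (tk ((k₀+n)+1)) ≤ Y (tk (k₀+n)) + D * (1/2)^(k₀+n) := by linarith
        calc Y (tk ((k₀+n)+1)) ≤ Y (tk (k₀+n)) + D * (1/2)^(k₀+n) := h5
          _ ≤ (Y (tk k₀) + D * ∑ j ∈ Finset.range n, (1/2:ℝ)^j) + D * (1/2)^n := by linarith
          _ = Y (tk k₀) + D * (∑ j ∈ Finset.range n, (1/2:ℝ)^j + (1/2)^n) := by ring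
    have h6 : ∑ j ∈ Finset.range N, ((1:ℝ)/2)^j ≤ 2 := sum_geometric_two_le N
    nlinarith
  -- contradiction with Y → ∞
  have hcomp2 : Tendsto (fun N : ℕ => Y (tk (k₀ + N))) atTop atTop := by
    apply hYtop.comp
    apply tk_tendsto.comp
    exact tendsto_atTop_atTop_of_monotone (fun a b h => by omega) (fun b => ⟨b, by omega⟩)
  obtain ⟨N, hN⟩ := (hcomp2.eventually (eventually_gt_atTop (Y (tk k₀) + 2 * D))).exists
  exact absurd (htel N) (not_le.mpr hN)


/-! ### Polynomial adjunction machinery (after Rosenlicht) -/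

/-- Evaluation of a polynomial `∑ i < n, cᵢ · yⁱ` with functional coefficients. -/
def PEval (c : ℕ → ℝ → ℝ) (y : ℝ → ℝ) (n : ℕ) : ℝ → ℝ :=
  fun t => ∑ i ∈ Finset.range n, c i t * y t ^ i

/-- A class of germs with eventually constant sign, closed under ring operations and a
twisted derivation `h ↦ mu · h'`. -/
structure SignClass (car : Set (ℝ → ℝ)) (mu : ℝ → ℝ) : Prop where
  mu_pos : ∀ᶠ t in atTop, 0 < mu t
  smooth : ∀ h ∈ car, ∀ᶠ t in atTop, ∀ n : ℕ, ContDiffAt ℝ n h t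
  signdef : ∀ h ∈ car, (h =ᶠ[atTop] (fun _ => 0)) ∨ (∀ᶠ t in atTop, h t ≠ 0)
  zero_mem : (fun _ : ℝ => (0:ℝ)) ∈ car
  one_mem : (fun _ : ℝ => (1:ℝ)) ∈ car
  add_mem : ∀ a ∈ car, ∀ b ∈ car, (fun t => a t + b t) ∈ car
  neg_mem : ∀ a ∈ car, (fun t => -(a t)) ∈ car
  mul_mem : ∀ a ∈ car, ∀ b ∈ car, (fun t => a t * b t) ∈ car
  germ : ∀ a ∈ car, ∀ b : ℝ → ℝ, a =ᶠ[atTop] b → b ∈ car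
  mud : ∀ a ∈ car, (fun t => mu t * deriv a t) ∈ car

namespace SignClass

variable {car : Set (ℝ → ℝ)} {mu : ℝ → ℝ}

lemma nsmul_mem (C : SignClass car mu) {a : ℝ → ℝ} (ha : a ∈ car) (k : ℕ) :
    (fun t => (k:ℝ) * a t) ∈ car := by
  induction k with
  | zero => exact C.germ _ C.zero_mem _ (Filter.EventuallyEq.of_eq (by funext t; simp))
  | succ m ih =>
      have := C.add_mem _ ih _ ha
      exact C.germ _ this _ (Filter.EventuallyEq.of_eq (by funext t; push_cast; ring))

end SignClass

/-- The set of germs which agree eventually with a polynomial in `y` with coefficients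
in `car` (normalized so that coefficients beyond the degree bound vanish). -/
def PolySet (car : Set (ℝ → ℝ)) (y : ℝ → ℝ) : Set (ℝ → ℝ) :=
  {h | ∃ n : ℕ, ∃ c : ℕ → ℝ → ℝ, (∀ i, c i ∈ car) ∧ (∀ i, n ≤ i → c i = fun _ => 0) ∧
    h =ᶠ[atTop] PEval c y n}

section PolyBasic

variable {car : Set (ℝ → ℝ)} {mu y : ℝ → ℝ}

lemma PEval_congr_coeff {c c' : ℕ → ℝ → ℝ} {n : ℕ} (h : ∀ i < n, c i = c' i) :
    PEval c y n = PEval c' y n := by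
  funext t
  exact Finset.sum_congr rfl fun i hi => by rw [h i (Finset.mem_range.mp hi)]

lemma PEval_extend {c : ℕ → ℝ → ℝ} {n N : ℕ} (hN : n ≤ N)
    (hz : ∀ i, n ≤ i → c i = fun _ => 0) :
    PEval c y N = PEval c y n := by
  funext t
  refine (Finset.sum_subset (Finset.range_subset_range.mpr hN) fun i _ hi => ?_).symm
  rw [hz i (le_of_not_gt (fun hlt => hi (Finset.mem_range.mpr hlt)))]
  simp

lemma polySet_germ {a b : ℝ → ℝ} (ha : a ∈ PolySet car y) (hab : a =ᶠ[atTop] b) :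
    b ∈ PolySet car y := by
  obtain ⟨n, c, hc, hz, he⟩ := ha
  exact ⟨n, c, hc, hz, hab.symm.trans he⟩

lemma mem_polySet_of_mem (C : SignClass car mu) {a : ℝ → ℝ} (ha : a ∈ car) :
    a ∈ PolySet car y := by
  refine ⟨1, fun i => if i = 0 then a else fun _ => 0, ?_, ?_, ?_⟩
  · intro i; by_cases h : i = 0 <;> simp [h, ha, C.zero_mem]
  · intro i hi
    have : i ≠ 0 := by omega
    simp [this]
  · refine Filter.EventuallyEq.of_eq ?_
    funext t
    simp [PEval]

lemma y_mem_polySet (C : SignClass car mu) : y ∈ PolySet car y := by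
  refine ⟨2, fun i => if i = 1 then (fun _ => 1) else fun _ => 0, ?_, ?_, ?_⟩
  · intro i; by_cases h : i = 1 <;> simp [h, C.one_mem, C.zero_mem]
  · intro i hi
    have : i ≠ 1 := by omega
    simp [this]
  · refine Filter.EventuallyEq.of_eq ?_
    funext t
    simp [PEval, Finset.sum_range_succ]

lemma zero_mem_polySet (C : SignClass car mu) : (fun _ : ℝ => (0:ℝ)) ∈ PolySet car y :=
  mem_polySet_of_mem C C.zero_mem

lemma polySet_add (C : SignClass car mu) {a b : ℝ → ℝ}
    (ha : a ∈ PolySet car y) (hb : b ∈ PolySet car y) :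
    (fun t => a t + b t) ∈ PolySet car y := by
  obtain ⟨n, c, hc, hz, he⟩ := ha
  obtain ⟨n', c', hc', hz', he'⟩ := hb
  refine ⟨max n n', fun i => fun t => c i t + c' i t, ?_, ?_, ?_⟩
  · exact fun i => C.add_mem _ (hc i) _ (hc' i)
  · intro i hi
    show (fun t => c i t + c' i t) = fun _ => 0
    rw [hz i (le_trans (le_max_left _ _) hi), hz' i (le_trans (le_max_right _ _) hi)]
    funext t; simp
  · have h1 : PEval c y (max n n') = PEval c y n := PEval_extend (le_max_left _ _) hz
    have h2 : PEval c' y (max n n') = PEval c' y n' := PEval_extend (le_max_right _ _) hz'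
    have h3 : PEval (fun i => fun t => c i t + c' i t) y (max n n')
        = fun t => PEval c y (max n n') t + PEval c' y (max n n') t := by
      funext t
      simp only [PEval, ← Finset.sum_add_distrib]
      exact Finset.sum_congr rfl fun i _ => by ring
    rw [h3, h1, h2]
    filter_upwards [he, he'] with t h h'
    show a t + b t = PEval c y n t + PEval c' y n' t
    rw [h, h']

lemma polySet_neg (C : SignClass car mu) {a : ℝ → ℝ} (ha : a ∈ PolySet car y) :
    (fun t => -(a t)) ∈ PolySet car y := by
  obtain ⟨n, c, hc, hz, he⟩ := ha
  refine ⟨n, fun i => fun t => -(c i t), fun i => C.neg_mem _ (hc i), ?_, ?_⟩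
  · intro i hi
    show (fun t => -(c i t)) = fun _ => 0
    rw [hz i hi]; funext t; simp
  · have : PEval (fun i => fun t => -(c i t)) y n = fun t => -(PEval c y n t) := by
      funext t
      simp only [PEval, ← Finset.sum_neg_distrib]
      exact Finset.sum_congr rfl fun i _ => by ring
    rw [this]
    filter_upwards [he] with t h
    show -(a t) = -(PEval c y n t)
    rw [h]

lemma polySet_monomial_mul (C : SignClass car mu) {a : ℝ → ℝ} (ha : a ∈ car) (k : ℕ)
    {h : ℝ → ℝ} (hh : h ∈ PolySet car y) :
    (fun t => a t * y t ^ k * h t) ∈ PolySet car y := by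
  obtain ⟨n, c, hc, hz, he⟩ := hh
  refine ⟨n + k, fun i => if k ≤ i then (fun t => a t * c (i - k) t) else fun _ => 0,
    ?_, ?_, ?_⟩
  · intro i
    by_cases hki : k ≤ i
    · simpa [hki] using C.mul_mem _ ha _ (hc (i - k))
    · simpa [hki] using C.zero_mem
  · intro i hi
    have hki : k ≤ i := le_trans (Nat.le_add_left _ _) hi
    have hnik : n ≤ i - k := by omega
    show (if k ≤ i then (fun t => a t * c (i - k) t) else fun _ => 0) = fun _ => 0
    rw [if_pos hki, hz _ hnik]
    funext t; simp
  · have key : ∀ t, PEval (fun i => if k ≤ i then (fun t => a t * c (i - k) t) else fun _ => 0)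
        y (n + k) t = a t * y t ^ k * PEval c y n t := by
      intro t
      have hsplit : Finset.range (n + k) = Finset.Ico 0 k ∪ Finset.Ico k (n + k) := by
        rw [Finset.range_eq_Ico]
        rw [Finset.Ico_union_Ico_eq_Ico (Nat.zero_le k) (Nat.le_add_left k n)]
      rw [PEval, hsplit, Finset.sum_union]
      · have hz1 : ∑ i ∈ Finset.Ico 0 k,
            (if k ≤ i then (fun t => a t * c (i - k) t) else fun _ => 0) t * y t ^ i = 0 := by
          apply Finset.sum_eq_zero
          intro i hi
          have : ¬ k ≤ i := by
            have := (Finset.mem_Ico.mp hi).2; omega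
          simp [this]
        rw [hz1, zero_add, Finset.sum_Ico_eq_sum_range]
        have : ∀ j ∈ Finset.range (n + k - k),
            (if k ≤ k + j then (fun t => a t * c (k + j - k) t) else fun _ => 0) t * y t ^ (k + j)
            = a t * y t ^ k * (c j t * y t ^ j) := by
          intro j _
          have h1 : k ≤ k + j := Nat.le_add_right _ _
          have h2 : k + j - k = j := by omega
          rw [if_pos h1, h2]
          show a t * c j t * y t ^ (k + j) = a t * y t ^ k * (c j t * y t ^ j)
          rw [pow_add]
          ring
        rw [Finset.sum_congr rfl this]
        have h3 : n + k - k = n := by omega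
        rw [h3, ← Finset.mul_sum]
        rfl
      · apply Finset.Ico_disjoint_Ico_consecutive
    refine he.mono fun t ht => ?_
    rw [key t, ← ht]

lemma polySet_mul_peval (C : SignClass car mu) :
    ∀ (n : ℕ) (c : ℕ → ℝ → ℝ), (∀ i, c i ∈ car) →
    ∀ h ∈ PolySet car y, (fun t => PEval c y n t * h t) ∈ PolySet (car) y := by
  intro n
  induction n with
  | zero =>
      intro c hc h hh
      apply polySet_germ (zero_mem_polySet C)
      refine Filter.EventuallyEq.of_eq ?_
      funext t; simp [PEval]
  | succ n ih =>
      intro c hc h hh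
      have h1 : ∀ t, PEval c y (n+1) t * h t
          = PEval c y n t * h t + c n t * y t ^ n * h t := by
        intro t
        simp only [PEval, Finset.sum_range_succ]
        ring
      have h2 := ih c hc h hh
      have h3 := polySet_monomial_mul C (hc n) n hh
      have h4 := polySet_add C h2 h3
      apply polySet_germ h4
      refine Filter.EventuallyEq.of_eq ?_
      funext t
      exact (h1 t).symm

lemma polySet_mul (C : SignClass car mu) {a b : ℝ → ℝ}
    (ha : a ∈ PolySet car y) (hb : b ∈ PolySet car y) :
    (fun t => a t * b t) ∈ PolySet car y := by
  obtain ⟨n, c, hc, hz, he⟩ := ha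
  have := polySet_mul_peval C n c hc b hb
  apply polySet_germ this
  filter_upwards [he] with t ht
  show PEval c y n t * b t = a t * b t
  rw [ht]

end PolyBasic


section PolyCalc

variable {car : Set (ℝ → ℝ)} {mu y ν : ℝ → ℝ}

lemma coeff_smooth (C : SignClass car mu) {c : ℕ → ℝ → ℝ} (hc : ∀ i, c i ∈ car) (n : ℕ) :
    ∀ᶠ t in atTop, ∀ i < n, ∀ m : ℕ, ContDiffAt ℝ m (c i) t := by
  have h1 : ∀ i ∈ Finset.range n, ∀ᶠ t in atTop, ∀ m : ℕ, ContDiffAt ℝ m (c i) t :=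
    fun i _ => C.smooth _ (hc i)
  have h2 := (Filter.eventually_all_finset (Finset.range n)).mpr h1
  filter_upwards [h2] with t ht i hi m
  exact ht i (Finset.mem_range.mpr hi) m

lemma PEval_contDiffAt {c : ℕ → ℝ → ℝ} {n : ℕ} {t : ℝ}
    (hc : ∀ i < n, ∀ m : ℕ, ContDiffAt ℝ m (c i) t)
    (hy : ∀ m : ℕ, ContDiffAt ℝ m y t) (m : ℕ) :
    ContDiffAt ℝ m (PEval c y n) t := by
  apply ContDiffAt.sum
  intro i hi
  exact (hc i (Finset.mem_range.mp hi) m).mul ((hy m).pow i)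

lemma PEval_hasDerivAt {c : ℕ → ℝ → ℝ} {n : ℕ} {t : ℝ}
    (hc : ∀ i < n, ∀ m : ℕ, ContDiffAt ℝ m (c i) t)
    (hy : ∀ m : ℕ, ContDiffAt ℝ m y t) :
    HasDerivAt (PEval c y n)
      (∑ i ∈ Finset.range n,
        (deriv (c i) t * y t ^ i + c i t * ((i:ℝ) * y t ^ (i-1) * deriv y t))) t := by
  have hyd : HasDerivAt y (deriv y t) t :=
    ((hy 1).differentiableAt (by norm_num)).hasDerivAt
  apply HasDerivAt.fun_sum
  intro i hi
  have hci : HasDerivAt (c i) (deriv (c i) t) t :=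
    ((hc i (Finset.mem_range.mp hi) 1).differentiableAt (by norm_num)).hasDerivAt
  exact hci.mul (hyd.pow i)

/-- coefficients of `mu·(P(y))'`. -/
def dCoeff (mu ν : ℝ → ℝ) (c : ℕ → ℝ → ℝ) : ℕ → ℝ → ℝ :=
  fun j => fun t => mu t * deriv (c j) t + ((j:ℝ)+1) * (c (j+1) t * ν t)

lemma dCoeff_mem (C : SignClass car mu) (hν : ν ∈ car) {c : ℕ → ℝ → ℝ}
    (hc : ∀ i, c i ∈ car) (j : ℕ) : dCoeff mu ν c j ∈ car := by
  have h1 := C.mud _ (hc j)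
  have h2 := C.nsmul_mem (C.mul_mem _ (hc (j+1)) _ hν) (j+1)
  have h3 := C.add_mem _ h1 _ h2
  apply C.germ _ h3
  refine Filter.EventuallyEq.of_eq ?_
  funext t
  show mu t * deriv (c j) t + ((j+1:ℕ):ℝ) * (c (j+1) t * ν t) = dCoeff mu ν c j t
  show _ = mu t * deriv (c j) t + ((j:ℝ)+1) * (c (j+1) t * ν t)
  push_cast
  ring

lemma dCoeff_norm {c : ℕ → ℝ → ℝ} {n : ℕ} (hz : ∀ i, n ≤ i → c i = fun _ => 0) :
    ∀ j, n ≤ j → dCoeff mu ν c j = fun _ => 0 := by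
  intro j hj
  have h1 : c j = fun _ => 0 := hz j hj
  have h2 : c (j+1) = fun _ => 0 := hz _ (by omega)
  funext t
  show mu t * deriv (c j) t + ((j:ℝ)+1) * (c (j+1) t * ν t) = 0
  rw [h1, h2]
  simp

lemma mu_deriv_PEval {c : ℕ → ℝ → ℝ} {n : ℕ} {t : ℝ}
    (hc : ∀ i < n, ∀ m : ℕ, ContDiffAt ℝ m (c i) t)
    (hy : ∀ m : ℕ, ContDiffAt ℝ m y t)
    (hz : ∀ i, n ≤ i → c i = fun _ => 0)
    (hyd : mu t * deriv y t = ν t) :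
    mu t * deriv (PEval c y n) t = PEval (dCoeff mu ν c) y n t := by
  rw [(PEval_hasDerivAt hc hy).deriv, Finset.mul_sum]
  have hterm : ∀ i ∈ Finset.range n,
      mu t * (deriv (c i) t * y t ^ i + c i t * ((i:ℝ) * y t ^ (i-1) * deriv y t))
      = mu t * deriv (c i) t * y t ^ i + (i:ℝ) * c i t * ν t * y t ^ (i-1) := by
    intro i _
    rw [← hyd]; ring
  rw [Finset.sum_congr rfl hterm, Finset.sum_add_distrib]
  have hrhs : PEval (dCoeff mu ν c) y n t
      = ∑ j ∈ Finset.range n, mu t * deriv (c j) t * y t ^ j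
        + ∑ j ∈ Finset.range n, ((j:ℝ)+1) * c (j+1) t * ν t * y t ^ j := by
    rw [PEval, ← Finset.sum_add_distrib]
    apply Finset.sum_congr rfl
    intro j _
    show (mu t * deriv (c j) t + ((j:ℝ)+1) * (c (j+1) t * ν t)) * y t ^ j = _
    ring
  rw [hrhs]
  congr 1
  cases n with
  | zero => simp
  | succ m =>
    rw [Finset.sum_range_succ']
    have hz0 : ((0:ℕ):ℝ) * c 0 t * ν t * y t ^ (0-1) = 0 := by norm_num
    rw [hz0, add_zero]
    rw [Finset.sum_range_succ (fun j => ((j:ℝ)+1) * c (j+1) t * ν t * y t ^ j) m]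
    have hcm : c (m+1) = fun _ => 0 := hz _ (le_refl _)
    have hlast : ((m:ℝ)+1) * c (m+1) t * ν t * y t ^ m = 0 := by
      rw [hcm]; simp
    rw [hlast, add_zero]
    apply Finset.sum_congr rfl
    intro i _
    have : i + 1 - 1 = i := by omega
    rw [this]
    push_cast
    ring

lemma mu_deriv_PEval_ev (C : SignClass car mu)
    (hy : ∀ᶠ t in atTop, ∀ m : ℕ, ContDiffAt ℝ m y t)
    (hyd : (fun t => mu t * deriv y t) =ᶠ[atTop] ν)
    {c : ℕ → ℝ → ℝ} {n : ℕ} (hc : ∀ i, c i ∈ car) (hz : ∀ i, n ≤ i → c i = fun _ => 0) :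
    (fun t => mu t * deriv (PEval c y n) t) =ᶠ[atTop] PEval (dCoeff mu ν c) y n := by
  filter_upwards [coeff_smooth C hc n, hy, hyd] with t h1 h2 h3
  exact mu_deriv_PEval h1 h2 hz h3

end PolyCalc


section SignDefMain

variable {car : Set (ℝ → ℝ)} {mu y ν : ℝ → ℝ}

theorem polySet_signdef_aux (C : SignClass car mu)
    (hy : ∀ᶠ t in atTop, ∀ m : ℕ, ContDiffAt ℝ m y t)
    (hν : ν ∈ car)
    (hyd : (fun t => mu t * deriv y t) =ᶠ[atTop] ν) :
    ∀ (n : ℕ) (c : ℕ → ℝ → ℝ), (∀ i, c i ∈ car) → (∀ i, n ≤ i → c i = fun _ => 0) →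
      (PEval c y n =ᶠ[atTop] (fun _ => 0)) ∨ (∀ᶠ t in atTop, PEval c y n t ≠ 0) := by
  intro n
  induction n with
  | zero =>
      intro c hc hz
      left
      refine Filter.EventuallyEq.of_eq ?_
      funext t; simp [PEval]
  | succ n ih =>
      intro c hc hz
      rcases C.signdef _ (hc n) with hzn | hne
      · -- top coefficient vanishes: reduce the degree
        set c' : ℕ → ℝ → ℝ := fun i => if i < n then c i else fun _ => 0 with hc'def
        have hc'mem : ∀ i, c' i ∈ car := by
          intro i; by_cases h : i < n <;> simp [hc'def, h, hc i, C.zero_mem]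
        have hc'z : ∀ i, n ≤ i → c' i = fun _ => 0 := by
          intro i hi
          have h : ¬ i < n := by omega
          simp [hc'def, h]
        have heq : PEval c y (n+1) =ᶠ[atTop] PEval c' y n := by
          filter_upwards [hzn] with t ht
          have h0 : c n t = 0 := ht
          show PEval c y (n+1) t = PEval c' y n t
          simp only [PEval]
          rw [Finset.sum_range_succ, h0, zero_mul, add_zero]
          apply Finset.sum_congr rfl
          intro i hi
          have h : i < n := Finset.mem_range.mp hi
          simp [hc'def, h]
        rcases ih c' hc'mem hc'z with h | h
        · left; exact heq.trans h
        · right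
          filter_upwards [heq, h] with t ha hb
          rw [ha]; exact hb
      · -- top coefficient eventually nonzero: Rolle / monotonicity argument
        by_contra hcon
        rw [not_or] at hcon
        obtain ⟨h1, h2⟩ := hcon
        have hfreq0 : ∃ᶠ t in atTop, PEval c y (n+1) t = 0 := by
          rw [Filter.not_eventually] at h2
          exact h2.mono fun t ht => not_not.mp ht
        have hfreqne : ∃ᶠ t in atTop, PEval c y (n+1) t ≠ 0 := by
          have h1' : ¬ ∀ᶠ t in atTop, PEval c y (n+1) t = 0 := by
            intro hcontra
            exact h1 (hcontra.mono fun t ht => ht)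
          rw [Filter.not_eventually] at h1'
          exact h1'
        -- the coefficients of `mu · cₙ² · (p/cₙ)'`
        set e : ℕ → ℝ → ℝ := fun j => fun t =>
          c n t * dCoeff mu ν c j t - (mu t * deriv (c n) t) * c j t with hedef
        have hemem : ∀ j, e j ∈ car := by
          intro j
          have hmem := C.add_mem _ (C.mul_mem _ (hc n) _ (dCoeff_mem C hν hc j)) _
            (C.neg_mem _ (C.mul_mem _ (C.mud _ (hc n)) _ (hc j)))
          apply C.germ _ hmem
          refine Filter.EventuallyEq.of_eq ?_
          funext t
          show c n t * dCoeff mu ν c j t + -(mu t * deriv (c n) t * c j t) = e j t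
          rw [hedef]
          ring
        set e' : ℕ → ℝ → ℝ := fun j => if j < n then e j else fun _ => 0 with he'def
        have he'mem : ∀ j, e' j ∈ car := by
          intro j; by_cases h : j < n <;> simp [he'def, h, hemem j, C.zero_mem]
        have he'z : ∀ j, n ≤ j → e' j = fun _ => 0 := by
          intro j hj
          have h : ¬ j < n := by omega
          simp [he'def, h]
        -- pointwise good events
        have hq := mu_deriv_PEval_ev C hy hyd hc hz
        have hsm := coeff_smooth C hc (n+1)
        have hGood : ∀ᶠ t in atTop, (c n t ≠ 0) ∧ (0 < mu t) ∧
            (∀ i < n+1, ∀ m : ℕ, ContDiffAt ℝ m (c i) t) ∧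
            (∀ m : ℕ, ContDiffAt ℝ m y t) ∧
            (mu t * deriv (PEval c y (n+1)) t = PEval (dCoeff mu ν c) y (n+1) t) := by
          filter_upwards [hne, C.mu_pos, hsm, hy, hq] with t a b cc d ee
          exact ⟨a, b, cc, d, ee⟩
        -- φ = p / cₙ and its derivative
        set p := PEval c y (n+1) with hpdef
        set φ : ℝ → ℝ := fun t => p t / c n t with hφdef
        set ψ : ℝ → ℝ := fun t => PEval e' y n t / (mu t * c n t ^ 2) with hψdef
        have hkey : ∀ t, (c n t ≠ 0) → (0 < mu t) →
            (∀ i < n+1, ∀ m : ℕ, ContDiffAt ℝ m (c i) t) →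
            (∀ m : ℕ, ContDiffAt ℝ m y t) →
            (mu t * deriv (PEval c y (n+1)) t = PEval (dCoeff mu ν c) y (n+1) t) →
            HasDerivAt φ (ψ t) t := by
          intro t hcn hmu hsmt hyt hqt
          have hD := PEval_hasDerivAt hsmt hyt
          have hcn' : HasDerivAt (c n) (deriv (c n) t) t :=
            ((hsmt n (by omega) 1).differentiableAt (by norm_num)).hasDerivAt
          have hdiv := hD.div hcn' hcn
          have hDval : deriv p t = ∑ i ∈ Finset.range (n+1),
              (deriv (c i) t * y t ^ i + c i t * ((i:ℝ) * y t ^ (i-1) * deriv y t)) :=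
            hD.deriv
          -- identify the derivative value with ψ t
          have hval : (∑ i ∈ Finset.range (n+1),
                (deriv (c i) t * y t ^ i + c i t * ((i:ℝ) * y t ^ (i-1) * deriv y t)))
                * c n t - p t * deriv (c n) t = PEval e' y n t / mu t := by
            have hmu' : mu t ≠ 0 := ne_of_gt hmu
            rw [eq_div_iff hmu']
            have step1 : ((∑ i ∈ Finset.range (n+1),
                (deriv (c i) t * y t ^ i + c i t * ((i:ℝ) * y t ^ (i-1) * deriv y t)))
                * c n t - p t * deriv (c n) t) * mu t
                = c n t * (mu t * deriv p t) - (mu t * deriv (c n) t) * p t := by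
              rw [hDval]; ring
            rw [step1, hqt]
            -- expand into the e-coefficients
            have step2 : c n t * PEval (dCoeff mu ν c) y (n+1) t
                - (mu t * deriv (c n) t) * PEval c y (n+1) t
                = ∑ j ∈ Finset.range (n+1), e j t * y t ^ j := by
              simp only [PEval, Finset.mul_sum, ← Finset.sum_sub_distrib]
              apply Finset.sum_congr rfl
              intro j _
              rw [hedef]
              show c n t * (dCoeff mu ν c j t * y t ^ j)
                  - mu t * deriv (c n) t * (c j t * y t ^ j)
                  = (c n t * dCoeff mu ν c j t - mu t * deriv (c n) t * c j t) * y t ^ j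
              ring
            rw [step2, Finset.sum_range_succ]
            have hen : e n t = 0 := by
              rw [hedef]
              show c n t * dCoeff mu ν c n t - mu t * deriv (c n) t * c n t = 0
              have hdc : dCoeff mu ν c n t
                  = mu t * deriv (c n) t + ((n:ℝ)+1) * (c (n+1) t * ν t) := rfl
              have hc1 : c (n+1) = fun _ => 0 := hz _ (le_refl _)
              rw [hdc, hc1]
              simp
              ring
            rw [hen, zero_mul, add_zero]
            show ∑ j ∈ Finset.range n, e j t * y t ^ j = PEval e' y n t
            rw [PEval]
            apply Finset.sum_congr rfl
            intro j hj
            have h : j < n := Finset.mem_range.mp hj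
            simp [he'def, h]
          have hψval : ((∑ i ∈ Finset.range (n+1),
                (deriv (c i) t * y t ^ i + c i t * ((i:ℝ) * y t ^ (i-1) * deriv y t)))
                * c n t - p t * deriv (c n) t) / c n t ^ 2 = ψ t := by
            rw [hval, hψdef]
            show PEval e' y n t / mu t / c n t ^ 2 = PEval e' y n t / (mu t * c n t ^ 2)
            rw [div_div]
          rw [← hψval]
          exact hdiv
        -- apply the inductive hypothesis to the reduced polynomial
        rcases ih e' he'mem he'z with hQ0 | hQne
        · -- derivative vanishes: φ eventually constant, p eventually zero
          have hever : ∀ᶠ t in atTop, HasDerivAt φ 0 t ∧ c n t ≠ 0 := by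
            filter_upwards [hGood, hQ0] with t hg hq0
            have hd := hkey t hg.1 hg.2.1 hg.2.2.1 hg.2.2.2.1 hg.2.2.2.2
            have h0 : ψ t = 0 := by
              rw [hψdef]
              show PEval e' y n t / (mu t * c n t ^ 2) = 0
              have : PEval e' y n t = 0 := hq0
              rw [this, zero_div]
            rw [h0] at hd
            exact ⟨hd, hg.1⟩
          obtain ⟨T, hT⟩ := hever.exists_forall_of_atTop
          have hconst := const_of_deriv_zero_tail (fun t ht => (hT t ht).1)
          obtain ⟨z, hz1, hz2⟩ := (hfreq0.and_eventually (eventually_ge_atTop T)).exists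
          have hφT : φ T = 0 := by
            have h3 : φ z = 0 := by
              rw [hφdef]
              show p z / c n z = 0
              rw [hz1, zero_div]
            rw [hconst z hz2] at h3
            exact h3
          have hpz : ∀ᶠ t in atTop, p t = 0 := by
            filter_upwards [eventually_ge_atTop T] with t ht
            have h4 : φ t = 0 := by rw [hconst t ht]; exact hφT
            have h5 : p t / c n t = 0 := h4
            rcases div_eq_zero_iff.mp h5 with h6 | h6
            · exact h6
            · exact absurd h6 (hT t ht).2
          obtain ⟨z', hz1', hz2'⟩ := (hfreqne.and_eventually hpz).exists
          exact hz1' hz2'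
        · -- derivative of constant sign: φ strictly monotone, at most one zero
          have hQcont : ∀ᶠ t in atTop, ContinuousAt (PEval e' y n) t := by
            filter_upwards [coeff_smooth C he'mem n, hy] with t ht hyt
            exact (PEval_contDiffAt ht hyt 0).continuousAt
          rcases sign_const hQcont hQne with hpos | hneg
          · have hever : ∀ᶠ t in atTop, HasDerivAt φ (ψ t) t ∧ 0 < ψ t ∧ c n t ≠ 0 := by
              filter_upwards [hGood, hpos] with t hg hq
              refine ⟨hkey t hg.1 hg.2.1 hg.2.2.1 hg.2.2.2.1 hg.2.2.2.2, ?_, hg.1⟩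
              rw [hψdef]
              show 0 < PEval e' y n t / (mu t * c n t ^ 2)
              apply div_pos hq
              exact mul_pos hg.2.1 (pow_two_pos_of_ne_zero hg.1)
            obtain ⟨T, hT⟩ := hever.exists_forall_of_atTop
            have hmono := strictMonoOn_tail (fun t ht => (hT t ht).1) (fun t ht => (hT t ht).2.1)
            obtain ⟨z, hza, hzb⟩ := (hfreq0.and_eventually (eventually_ge_atTop T)).exists
            obtain ⟨w, hwa, hwb⟩ := (hfreq0.and_eventually (eventually_ge_atTop (z+1))).exists
            have hzw : z < w := by linarith
            have hφz : φ z = 0 := by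
              show p z / c n z = 0
              rw [hza, zero_div]
            have hφw : φ w = 0 := by
              show p w / c n w = 0
              rw [hwa, zero_div]
            have := hmono (Set.mem_Ici.mpr hzb) (Set.mem_Ici.mpr (by linarith)) hzw
            rw [hφz, hφw] at this
            exact lt_irrefl 0 this
          · have hever : ∀ᶠ t in atTop, HasDerivAt φ (ψ t) t ∧ ψ t < 0 ∧ c n t ≠ 0 := by
              filter_upwards [hGood, hneg] with t hg hq
              refine ⟨hkey t hg.1 hg.2.1 hg.2.2.1 hg.2.2.2.1 hg.2.2.2.2, ?_, hg.1⟩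
              rw [hψdef]
              show PEval e' y n t / (mu t * c n t ^ 2) < 0
              apply div_neg_of_neg_of_pos hq
              exact mul_pos hg.2.1 (pow_two_pos_of_ne_zero hg.1)
            obtain ⟨T, hT⟩ := hever.exists_forall_of_atTop
            have hmono := strictAntiOn_tail (fun t ht => (hT t ht).1) (fun t ht => (hT t ht).2.1)
            obtain ⟨z, hza, hzb⟩ := (hfreq0.and_eventually (eventually_ge_atTop T)).exists
            obtain ⟨w, hwa, hwb⟩ := (hfreq0.and_eventually (eventually_ge_atTop (z+1))).exists
            have hzw : z < w := by linarith
            have hφz : φ z = 0 := by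
              show p z / c n z = 0
              rw [hza, zero_div]
            have hφw : φ w = 0 := by
              show p w / c n w = 0
              rw [hwa, zero_div]
            have := hmono (Set.mem_Ici.mpr hzb) (Set.mem_Ici.mpr (by linarith)) hzw
            rw [hφz, hφw] at this
            exact lt_irrefl 0 this

end SignDefMain


section Adjoin

variable {car : Set (ℝ → ℝ)} {mu y ν mm : ℝ → ℝ}

theorem SignClass.adjoin (C : SignClass car mu)
    (hy : ∀ᶠ t in atTop, ∀ k : ℕ, ContDiffAt ℝ k y t)
    (hν : ν ∈ car)
    (hyd : (fun t => mu t * deriv y t) =ᶠ[atTop] ν)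
    (hm : mm ∈ PolySet car y) (hmpos : ∀ᶠ t in atTop, 0 < mm t) :
    SignClass (PolySet car y) (fun t => mu t * mm t) where
  mu_pos := by filter_upwards [C.mu_pos, hmpos] with t h1 h2; exact mul_pos h1 h2
  smooth := by
    intro h hh
    obtain ⟨n, c, hc, hz, he⟩ := hh
    have hnbhd : ∀ᶠ t in atTop, h =ᶠ[nhds t] PEval c y n := by
      obtain ⟨T, hT⟩ := he.exists_forall_of_atTop
      filter_upwards [eventually_gt_atTop T] with t ht
      filter_upwards [Ioi_mem_nhds ht] with x hx
      exact hT x (le_of_lt hx)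
    filter_upwards [coeff_smooth C hc n, hy, hnbhd] with t h1 h2 h3 k
    exact (PEval_contDiffAt h1 h2 k).congr_of_eventuallyEq h3
  signdef := by
    intro h hh
    obtain ⟨n, c, hc, hz, he⟩ := hh
    rcases polySet_signdef_aux C hy hν hyd n c hc hz with h0 | hne
    · left; exact he.trans h0
    · right
      filter_upwards [he, hne] with t a b
      rw [a]; exact b
  zero_mem := zero_mem_polySet C
  one_mem := mem_polySet_of_mem C C.one_mem
  add_mem := fun a ha b hb => polySet_add C ha hb
  neg_mem := fun a ha => polySet_neg C ha
  mul_mem := fun a ha b hb => polySet_mul C ha hb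
  germ := fun a ha b hab => polySet_germ ha hab
  mud := by
    intro h hh
    obtain ⟨n, c, hc, hz, he⟩ := hh
    have hd : deriv h =ᶠ[atTop] deriv (PEval c y n) := eventuallyEq_deriv_atTop he
    have h1 : (fun t => mu t * deriv h t) =ᶠ[atTop] PEval (dCoeff mu ν c) y n := by
      have h2 := mu_deriv_PEval_ev C hy hyd hc hz
      filter_upwards [hd, h2] with t a b
      show mu t * deriv h t = _
      rw [a]; exact b
    have hPmem : PEval (dCoeff mu ν c) y n ∈ PolySet car y :=
      ⟨n, dCoeff mu ν c, dCoeff_mem C hν hc, dCoeff_norm hz, Filter.EventuallyEq.refl _ _⟩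
    have h3 : (fun t => mu t * deriv h t) ∈ PolySet car y := polySet_germ hPmem h1.symm
    have h4 := polySet_mul C hm h3
    apply polySet_germ h4
    refine Filter.EventuallyEq.of_eq ?_
    funext t
    show mm t * (mu t * deriv h t) = (mu t * mm t) * deriv h t
    ring

end Adjoin


/-! ### The tower of adjoined logarithms over a Hardy field -/

/-- A Hardy field is a `SignClass` with trivial weight. -/
lemma hardy_signclass (H : HardyField) : SignClass H.carrier (fun _ => 1) where
  mu_pos := by filter_upwards with t; norm_num
  smooth := H.eventually_smooth
  signdef := by
    intro h hh
    by_cases h0 : h =ᶠ[atTop] (0 : ℝ → ℝ)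
    · left; exact h0
    · right
      obtain ⟨g, hg, hfg⟩ := H.inv_mem h hh h0
      filter_upwards [hfg] with t ht
      intro hzero
      have h1 : h t * g t = 1 := ht
      rw [hzero, zero_mul] at h1
      exact zero_ne_one h1
  zero_mem := H.zero_mem
  one_mem := H.one_mem
  add_mem := fun a ha b hb => H.add_mem a ha b hb
  neg_mem := fun a ha => H.neg_mem a ha
  mul_mem := fun a ha b hb => H.mul_mem a ha b hb
  germ := fun a ha b hab => H.germ_closed a b hab ha
  mud := by
    intro a ha
    apply H.germ_closed _ _ _ (H.deriv_mem a ha)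
    refine Filter.EventuallyEq.of_eq ?_
    funext t
    show deriv a t = 1 * deriv a t
    ring

/-- the identity function. -/
def idf : ℝ → ℝ := fun t => t

section Tower

variable (H : HardyField)

lemma idf_smooth : ∀ᶠ t in atTop, ∀ k : ℕ, ContDiffAt ℝ k idf t := by
  filter_upwards with t k
  exact contDiff_id.contDiffAt

lemma C1 : SignClass (PolySet H.carrier idf) (fun t => (1:ℝ) * idf t) := by
  have C0 := hardy_signclass H
  have h := C0.adjoin (y := idf) (ν := fun _ => 1) (mm := idf) idf_smooth
    C0.one_mem ?_ (y_mem_polySet C0) ?_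
  · exact h
  · refine Filter.EventuallyEq.of_eq ?_
    funext t
    show (1:ℝ) * deriv idf t = 1
    have h1 : deriv idf t = 1 := by
      show deriv (fun s : ℝ => s) t = 1
      simp
    rw [h1]; ring
  · filter_upwards [eventually_gt_atTop (0:ℝ)] with t ht
    exact ht

lemma C2 : SignClass (PolySet (PolySet H.carrier idf) Real.log)
    (fun t => ((1:ℝ) * idf t) * Real.log t) := by
  have hC1 := C1 H
  have h := hC1.adjoin (y := Real.log) (ν := fun _ => 1) (mm := Real.log) ?_
    hC1.one_mem ?_ (y_mem_polySet hC1) ?_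
  · exact h
  · filter_upwards [eventually_gt_atTop (0:ℝ)] with t ht k
    exact Real.contDiffAt_log.mpr (ne_of_gt ht)
  · filter_upwards [eventually_gt_atTop (0:ℝ)] with t ht
    show (1:ℝ) * idf t * deriv Real.log t = 1
    rw [Real.deriv_log]
    show (1:ℝ) * t * t⁻¹ = 1
    field_simp
  · filter_upwards [eventually_gt_atTop (1:ℝ)] with t ht
    exact Real.log_pos ht

lemma log2_smooth : ∀ᶠ t in atTop, ∀ k : ℕ, ContDiffAt ℝ k log2 t := by
  filter_upwards [eventually_gt_atTop (Real.exp 1)] with t ht k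
  have ht0 : (0:ℝ) < t := lt_trans (Real.exp_pos 1) ht
  have hlog : Real.log t ≠ 0 := by
    have : (1:ℝ) < Real.log t := by
      have := Real.log_lt_log (Real.exp_pos 1) ht
      rwa [Real.log_exp] at this
    linarith
  have h1 : ContDiffAt ℝ k Real.log (Real.log t) := Real.contDiffAt_log.mpr hlog
  have h2 : ContDiffAt ℝ k Real.log t := Real.contDiffAt_log.mpr (ne_of_gt ht0)
  exact h1.comp t h2

lemma log2_hasDeriv {t : ℝ} (ht0 : 0 < t) (hlog : Real.log t ≠ 0) :
    HasDerivAt log2 ((Real.log t)⁻¹ * t⁻¹) t := by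
  have h1 : HasDerivAt Real.log (Real.log t)⁻¹ (Real.log t) := Real.hasDerivAt_log hlog
  have h2 : HasDerivAt Real.log t⁻¹ t := Real.hasDerivAt_log (ne_of_gt ht0)
  exact h1.comp t h2

lemma C3 : SignClass (PolySet (PolySet (PolySet H.carrier idf) Real.log) log2)
    (fun t => (((1:ℝ) * idf t) * Real.log t) * 1) := by
  have hC2 := C2 H
  have h := hC2.adjoin (y := log2) (ν := fun _ => 1) (mm := fun _ => 1) log2_smooth
    hC2.one_mem ?_ (mem_polySet_of_mem hC2 hC2.one_mem) ?_
  · exact h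
  · filter_upwards [eventually_gt_atTop (Real.exp 1)] with t ht
    have ht0 : (0:ℝ) < t := lt_trans (Real.exp_pos 1) ht
    have hlog : (1:ℝ) < Real.log t := by
      have := Real.log_lt_log (Real.exp_pos 1) ht
      rwa [Real.log_exp] at this
    have hlogne : Real.log t ≠ 0 := by linarith
    have hder : deriv log2 t = (Real.log t)⁻¹ * t⁻¹ := (log2_hasDeriv ht0 hlogne).deriv
    show (1:ℝ) * idf t * Real.log t * deriv log2 t = 1
    rw [hder]
    show (1:ℝ) * t * Real.log t * ((Real.log t)⁻¹ * t⁻¹) = 1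
    field_simp
  · filter_upwards with t
    norm_num

/-- membership in the top of the tower -/
lemma mem_car3_of_hardy {h : ℝ → ℝ} (hh : h ∈ H.carrier) :
    h ∈ PolySet (PolySet (PolySet H.carrier idf) Real.log) log2 :=
  mem_polySet_of_mem (C2 H)
    (mem_polySet_of_mem (C1 H) (mem_polySet_of_mem (hardy_signclass H) hh))

lemma idf_mem_car3 :
    idf ∈ PolySet (PolySet (PolySet H.carrier idf) Real.log) log2 :=
  mem_polySet_of_mem (C2 H) (mem_polySet_of_mem (C1 H) (y_mem_polySet (hardy_signclass H)))

lemma log_mem_car3 :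
    Real.log ∈ PolySet (PolySet (PolySet H.carrier idf) Real.log) log2 :=
  mem_polySet_of_mem (C2 H) (y_mem_polySet (C1 H))

lemma log2_mem_car3 :
    log2 ∈ PolySet (PolySet (PolySet H.carrier idf) Real.log) log2 :=
  y_mem_polySet (C2 H)

end Tower

/-! ### Sign and growth packages -/

lemma not_germ_zero_of_deriv {G w : ℝ → ℝ}
    (hGd : ∀ᶠ t in atTop, HasDerivAt G (w t) t)
    (hGinf : Tendsto (fun t => |G t|) atTop atTop) : ¬ w =ᶠ[atTop] (0:ℝ→ℝ) := by
  intro h0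
  have hd0 : ∀ᶠ t in atTop, HasDerivAt G 0 t := by
    filter_upwards [hGd, h0] with t h1 h2
    have hw : w t = 0 := h2
    rw [hw] at h1
    exact h1
  obtain ⟨T, hT⟩ := hd0.exists_forall_of_atTop
  have hconst := const_of_deriv_zero_tail hT
  obtain ⟨t, h1, h2⟩ := ((hGinf.eventually (eventually_gt_atTop (|G T|))).and
    (eventually_ge_atTop T)).exists
  rw [hconst t h2] at h1
  exact lt_irrefl _ h1

lemma no_neg_deriv_top {X w : ℝ → ℝ}
    (hd : ∀ᶠ t in atTop, HasDerivAt X (w t) t ∧ w t < 0)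
    (htop : Tendsto X atTop atTop) : False := by
  obtain ⟨T, hT⟩ := hd.exists_forall_of_atTop
  have hanti := strictAntiOn_tail (fun t ht => (hT t ht).1) (fun t ht => (hT t ht).2)
  obtain ⟨t, h1, h2⟩ := ((htop.eventually (eventually_gt_atTop (X T))).and
    (eventually_gt_atTop T)).exists
  have := hanti (mem_Ici.mpr le_rfl) (mem_Ici.mpr h2.le) h2
  linarith

lemma sign_package {G uu : ℝ → ℝ}
    (hGd : ∀ᶠ t in atTop, HasDerivAt G (uu t) t)
    (hGinf : Tendsto (fun t => |G t|) atTop atTop)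
    (huc : ∀ᶠ t in atTop, ContinuousAt uu t)
    (hune : ∀ᶠ t in atTop, uu t ≠ 0) :
    ∃ ε : ℝ, (∀ᶠ t in atTop, ε * G t = |G t|) ∧
      (∀ᶠ t in atTop, ε * uu t = |uu t|) := by
  have hGc : ∀ᶠ t in atTop, ContinuousAt G t := hGd.mono fun t ht => ht.continuousAt
  have hGne : ∀ᶠ t in atTop, G t ≠ 0 := by
    filter_upwards [hGinf.eventually (eventually_ge_atTop 1)] with t ht h0
    rw [h0] at ht
    simp at ht
    linarith
  rcases sign_const hGc hGne with hGp | hGn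
  · have htop : Tendsto G atTop atTop := by
      apply hGinf.congr'
      filter_upwards [hGp] with t ht
      exact abs_of_pos ht
    rcases sign_const huc hune with hup | hun
    · refine ⟨1, ?_, ?_⟩
      · filter_upwards [hGp] with t ht; rw [one_mul, abs_of_pos ht]
      · filter_upwards [hup] with t ht; rw [one_mul, abs_of_pos ht]
    · exfalso
      apply no_neg_deriv_top (X := G) (w := uu) _ htop
      filter_upwards [hGd, hun] with t h1 h2
      exact ⟨h1, h2⟩
  · have htop : Tendsto (fun t => -G t) atTop atTop := by
      apply hGinf.congr'
      filter_upwards [hGn] with t ht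
      exact abs_of_neg ht
    rcases sign_const huc hune with hup | hun
    · exfalso
      apply no_neg_deriv_top (X := fun t => -G t) (w := fun t => -uu t) _ htop
      filter_upwards [hGd, hup] with t h1 h2
      exact ⟨h1.neg, by linarith⟩
    · refine ⟨-1, ?_, ?_⟩
      · filter_upwards [hGn] with t ht; rw [abs_of_neg ht]; ring
      · filter_upwards [hun] with t ht; rw [abs_of_neg ht]; ring

/-! ### The ratio germ and its derivative data -/

/-- derivative of `s · (log₂)²`. -/
def DRfun (s : ℝ → ℝ) : ℝ → ℝ := fun t =>
  deriv s t * log2 t ^ 2 + s t * (((2:ℕ):ℝ) * log2 t ^ (2 - 1) * ((Real.log t)⁻¹ * t⁻¹))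

/-- `t · log t · DRfun s t`, an element of the adjoined class. -/
def NNfun (s : ℝ → ℝ) : ℝ → ℝ := fun t =>
  idf t * Real.log t * deriv s t * (log2 t * log2 t) + (s t + s t) * log2 t

lemma DRfun_hasDerivAt {s : ℝ → ℝ} {t : ℝ} (ht : Real.exp 1 < t)
    (hs : HasDerivAt s (deriv s t) t) :
    HasDerivAt (fun x => s x * log2 x ^ 2) (DRfun s t) t := by
  have ht0 : (0:ℝ) < t := lt_trans (Real.exp_pos 1) ht
  have hlog : (1:ℝ) < Real.log t := by
    have := Real.log_lt_log (Real.exp_pos 1) ht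
    rwa [Real.log_exp] at this
  have hld := log2_hasDeriv ht0 (by linarith)
  exact hs.mul (hld.pow 2)

lemma NNfun_mem (H : HardyField) {s : ℝ → ℝ} (hs : s ∈ H.carrier) :
    NNfun s ∈ PolySet (PolySet (PolySet H.carrier idf) Real.log) log2 := by
  have hC3 := C3 H
  have hds : deriv s ∈ H.carrier := H.deriv_mem s hs
  have h1 := hC3.mul_mem _ (hC3.mul_mem _ (hC3.mul_mem _ (idf_mem_car3 H) _ (log_mem_car3 H))
      _ (mem_car3_of_hardy H hds)) _ (hC3.mul_mem _ (log2_mem_car3 H) _ (log2_mem_car3 H))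
  have h2 := hC3.mul_mem _ (hC3.add_mem _ (mem_car3_of_hardy H hs) _ (mem_car3_of_hardy H hs))
      _ (log2_mem_car3 H)
  have h3 := hC3.add_mem _ h1 _ h2
  apply hC3.germ _ h3
  refine Filter.EventuallyEq.of_eq ?_
  funext t
  rfl

lemma NNfun_rel {s : ℝ → ℝ} {t : ℝ} (ht : Real.exp 1 < t) :
    t * Real.log t * DRfun s t = NNfun s t := by
  have ht0 : (0:ℝ) < t := lt_trans (Real.exp_pos 1) ht
  have hlog : (1:ℝ) < Real.log t := by
    have := Real.log_lt_log (Real.exp_pos 1) ht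
    rwa [Real.log_exp] at this
  have h1 : Real.log t ≠ 0 := by linarith
  have h2 : t ≠ 0 := ne_of_gt ht0
  show t * Real.log t * (deriv s t * log2 t ^ 2
      + s t * (((2:ℕ):ℝ) * log2 t ^ (2 - 1) * ((Real.log t)⁻¹ * t⁻¹)))
    = idf t * Real.log t * deriv s t * (log2 t * log2 t) + (s t + s t) * log2 t
  show t * Real.log t * (deriv s t * log2 t ^ 2
      + s t * (((2:ℕ):ℝ) * log2 t ^ (2 - 1) * ((Real.log t)⁻¹ * t⁻¹)))
    = t * Real.log t * deriv s t * (log2 t * log2 t) + (s t + s t) * log2 t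
  have hpow : log2 t ^ (2:ℕ) = log2 t * log2 t := sq (log2 t) ▸ by ring
  field_simp
  ring

/-! ### The main engine -/

lemma tendsto_abs_ratio (H : HardyField) {uu vv G F : ℝ → ℝ} {CX : ℝ}
    (huu : uu ∈ H.carrier) (hvv : vv ∈ H.carrier)
    (hGd : ∀ᶠ t in atTop, HasDerivAt G (uu t) t)
    (hFd : ∀ᶠ t in atTop, HasDerivAt F (vv t) t)
    (hGinf : Tendsto (fun t => |G t|) atTop atTop)
    (hFinf : Tendsto (fun t => |F t|) atTop atTop)
    (hGb : ∀ᶠ t in atTop, |G t| ≤ CX * log2 t) :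
    Tendsto (fun t => |vv t| * log2 t ^ 2 / |uu t|) atTop atTop := by
  have C0 := hardy_signclass H
  have hC3 := C3 H
  have huune : ¬ uu =ᶠ[atTop] (0:ℝ→ℝ) := not_germ_zero_of_deriv hGd hGinf
  have hvvne : ¬ vv =ᶠ[atTop] (0:ℝ→ℝ) := not_germ_zero_of_deriv hFd hFinf
  have hune : ∀ᶠ t in atTop, uu t ≠ 0 := (C0.signdef uu huu).resolve_left huune
  have hvne : ∀ᶠ t in atTop, vv t ≠ 0 := (C0.signdef vv hvv).resolve_left hvvne
  obtain ⟨ui, hui, huui⟩ := H.inv_mem uu huu huune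
  have hs : (fun t => vv t * ui t) ∈ H.carrier := H.mul_mem vv hvv ui hui
  set s : ℝ → ℝ := fun t => vv t * ui t with hsdef
  have hsq : ∀ᶠ t in atTop, s t = vv t / uu t := by
    filter_upwards [huui] with t h1
    have h3 : uu t * ui t = 1 := h1
    have h4 : ui t = (uu t)⁻¹ := eq_inv_of_mul_eq_one_left (by rw [mul_comm]; exact h3)
    show vv t * ui t = vv t / uu t
    rw [h4, div_eq_mul_inv]
  have hss := H.eventually_smooth _ hs
  have hRd : ∀ᶠ t in atTop, HasDerivAt (fun x => s x * log2 x ^ 2) (DRfun s t) t := by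
    filter_upwards [hss, eventually_gt_atTop (Real.exp 1)] with t hsm ht
    have hs' : HasDerivAt s (deriv s t) t :=
      ((hsm 1).differentiableAt (by norm_num)).hasDerivAt
    exact DRfun_hasDerivAt ht hs'
  have hNN := NNfun_mem H hs
  have hdich : Tendsto (fun t => |s t * log2 t ^ 2|) atTop atTop
      ∨ ∃ B, ∀ᶠ t in atTop, |s t * log2 t ^ 2| ≤ B := by
    rcases hC3.signdef _ hNN with hNN0 | hNNne
    · have hR0 : ∀ᶠ t in atTop, HasDerivAt (fun x => s x * log2 x ^ 2) 0 t := by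
        filter_upwards [hRd, hNN0, eventually_gt_atTop (Real.exp 1)] with t h1 h3 ht
        have ht0 : (0:ℝ) < t := lt_trans (Real.exp_pos 1) ht
        have hlog : (1:ℝ) < Real.log t := by
          have := Real.log_lt_log (Real.exp_pos 1) ht
          rwa [Real.log_exp] at this
        have h4 : NNfun s t = 0 := h3
        have h5 : t * Real.log t * DRfun s t = 0 := by rw [NNfun_rel ht, h4]
        have h7 : 0 < t * Real.log t := mul_pos ht0 (by linarith)
        have h6 : DRfun s t = 0 := by
          rcases mul_eq_zero.mp h5 with h | h
          · exact absurd h (ne_of_gt h7)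
          · exact h
        rw [← h6]
        exact h1
      obtain ⟨T, hT⟩ := hR0.exists_forall_of_atTop
      have hconst := const_of_deriv_zero_tail hT
      right
      refine ⟨|s T * log2 T ^ 2|, ?_⟩
      filter_upwards [eventually_ge_atTop T] with t ht
      have := hconst t ht
      rw [this]
    · have hNNc : ∀ᶠ t in atTop, ContinuousAt (NNfun s) t := by
        filter_upwards [hC3.smooth _ hNN] with t ht
        exact (ht 0).continuousAt
      rcases sign_const hNNc hNNne with hpos | hneg
      · have hmon : ∀ᶠ t in atTop,
            HasDerivAt (fun x => s x * log2 x ^ 2) (DRfun s t) t ∧ 0 < DRfun s t := by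
          filter_upwards [hRd, hpos, eventually_gt_atTop (Real.exp 1)] with t h1 h3 ht
          have ht0 : (0:ℝ) < t := lt_trans (Real.exp_pos 1) ht
          have hlog : (1:ℝ) < Real.log t := by
            have := Real.log_lt_log (Real.exp_pos 1) ht
            rwa [Real.log_exp] at this
          have h7 : 0 < t * Real.log t := mul_pos ht0 (by linarith)
          have h5 : 0 < t * Real.log t * DRfun s t := by rw [NNfun_rel ht]; exact h3
          refine ⟨h1, ?_⟩
          by_contra h6
          push_neg at h6
          nlinarith
        obtain ⟨T, hT⟩ := hmon.exists_forall_of_atTop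
        have hsm := strictMonoOn_tail (fun t ht => (hT t ht).1) (fun t ht => (hT t ht).2)
        exact mono_dichotomy (Or.inl hsm.monotoneOn)
      · have hmon : ∀ᶠ t in atTop,
            HasDerivAt (fun x => s x * log2 x ^ 2) (DRfun s t) t ∧ DRfun s t < 0 := by
          filter_upwards [hRd, hneg, eventually_gt_atTop (Real.exp 1)] with t h1 h3 ht
          have ht0 : (0:ℝ) < t := lt_trans (Real.exp_pos 1) ht
          have hlog : (1:ℝ) < Real.log t := by
            have := Real.log_lt_log (Real.exp_pos 1) ht
            rwa [Real.log_exp] at this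
          have h7 : 0 < t * Real.log t := mul_pos ht0 (by linarith)
          have h5 : t * Real.log t * DRfun s t < 0 := by rw [NNfun_rel ht]; exact h3
          refine ⟨h1, ?_⟩
          by_contra h6
          push_neg at h6
          nlinarith
        obtain ⟨T, hT⟩ := hmon.exists_forall_of_atTop
        have hsm := strictAntiOn_tail (fun t ht => (hT t ht).1) (fun t ht => (hT t ht).2)
        exact mono_dichotomy (Or.inr hsm.antitoneOn)
  have habs_eq : ∀ᶠ t in atTop, |s t * log2 t ^ 2| = |vv t| * log2 t ^ 2 / |uu t| := by
    filter_upwards [hsq] with t h1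
    rw [h1, abs_mul, abs_div]
    have h2 : |log2 t ^ 2| = log2 t ^ 2 := abs_of_nonneg (by positivity)
    rw [h2, div_mul_eq_mul_div]
  rcases hdich with htop | ⟨B, hB⟩
  · exact htop.congr' habs_eq
  · exfalso
    have hB'pos : (0:ℝ) < max B 1 := lt_of_lt_of_le one_pos (le_max_right _ _)
    have hbound : ∀ᶠ t in atTop, |vv t| * log2 t ^ 2 ≤ max B 1 * |uu t| := by
      filter_upwards [hB, habs_eq, hune] with t h1 h2 h3
      have h4 : |vv t| * log2 t ^ 2 / |uu t| ≤ max B 1 := by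
        rw [← h2]
        exact le_trans h1 (le_max_left _ _)
      have h5 : 0 < |uu t| := abs_pos.mpr h3
      calc |vv t| * log2 t ^ 2 = |vv t| * log2 t ^ 2 / |uu t| * |uu t| :=
            (div_mul_cancel₀ _ (ne_of_gt h5)).symm
        _ ≤ max B 1 * |uu t| := mul_le_mul_of_nonneg_right h4 h5.le
    have huc : ∀ᶠ t in atTop, ContinuousAt uu t :=
      (H.eventually_smooth uu huu).mono fun t ht => (ht 0).continuousAt
    have hvc : ∀ᶠ t in atTop, ContinuousAt vv t :=
      (H.eventually_smooth vv hvv).mono fun t ht => (ht 0).continuousAt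
    obtain ⟨ε₁, hε₁G, hε₁u⟩ := sign_package hGd hGinf huc hune
    obtain ⟨ε₂, hε₂F, hε₂v⟩ := sign_package hFd hFinf hvc hvne
    have hbig : ∀ᶠ t in atTop,
        HasDerivAt (fun x => ε₁ * G x) (ε₁ * uu t) t ∧
        HasDerivAt (fun x => ε₂ * F x) (ε₂ * vv t) t ∧
        0 ≤ ε₂ * vv t ∧
        (1 / max B 1) * ((ε₂ * vv t) * Real.log (Real.log t) ^ 2) ≤ ε₁ * uu t ∧
        (ε₁ * G t) ≤ CX * Real.log (Real.log t) := by
      filter_upwards [hGd, hFd, hε₁G, hε₁u, hε₂v, hbound, hGb] with t h1 h2 h3 h4 h5 h6 h7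
      refine ⟨h1.const_mul ε₁, h2.const_mul ε₂, ?_, ?_, ?_⟩
      · rw [h5]; exact abs_nonneg _
      · rw [h4, h5]
        have h8 : (1 / max B 1) * (|vv t| * log2 t ^ 2)
            ≤ (1 / max B 1) * (max B 1 * |uu t|) :=
          mul_le_mul_of_nonneg_left h6 (by positivity)
        calc (1 / max B 1) * (|vv t| * Real.log (Real.log t) ^ 2)
            ≤ (1 / max B 1) * (max B 1 * |uu t|) := h8
          _ = |uu t| := by field_simp
      · rw [h3]; exact h7
    obtain ⟨T, hT⟩ := hbig.exists_forall_of_atTop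
    have hYtop : Tendsto (fun t => ε₂ * F t) atTop atTop := by
      apply hFinf.congr'
      filter_upwards [hε₂F] with t ht
      exact ht.symm
    exact block_contra (c := 1 / max B 1) (by positivity)
      (fun t ht => (hT t ht).1) (fun t ht => (hT t ht).2.1)
      (fun t ht => (hT t ht).2.2.1) (fun t ht => (hT t ht).2.2.2.1)
      (fun t ht => (hT t ht).2.2.2.2) hYtop

end Stmt5Aux
open Stmt5Aux


/-- If `f, g` belong to a Hardy field, each of `|f|, |g|` tends to `∞` or to `0`,
`|f| ≺ |g| ≺ |f|·log^m(t)` and `|log|f|| ≪ log₂(t)`, then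
`|f'/f|/(log₂ t)² ≺ |g'/g| ≺ |f'/f|·(log₂ t)²`. -/
theorem stmt_5 (m : ℕ) (𝓗 : HardyField) (f g : ℝ → ℝ)
    (hf : f ∈ 𝓗.carrier) (hg : g ∈ 𝓗.carrier)
    (h1f : Tendsto (fun t => |f t|) atTop atTop ∨ Tendsto f atTop (nhds 0))
    (h1g : Tendsto (fun t => |g t|) atTop atTop ∨ Tendsto g atTop (nhds 0))
    (h2 : Prec (fun t => |f t|) (fun t => |g t|))
    (h3 : Prec (fun t => |g t|) (fun t => |f t| * Real.log t ^ m))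
    (h4 : Ll (fun t => |Real.log (|f t|)|) log2) :
    Prec (fun t => |deriv f t / f t| / log2 t ^ 2) (fun t => |deriv g t / g t|) ∧
      Prec (fun t => |deriv g t / g t|) (fun t => |deriv f t / f t| * log2 t ^ 2) := by
  have hfg_ne : ∀ᶠ t in atTop, f t ≠ 0 ∧ g t ≠ 0 := by
    filter_upwards [h2.eventually (eventually_ge_atTop 1)] with t ht
    constructor
    · intro h0
      rw [h0] at ht
      simp at ht
      linarith
    · intro h0
      rw [h0] at ht
      simp at ht
      linarith
  have hfne : ¬ f =ᶠ[atTop] (0:ℝ→ℝ) := by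
    intro h0
    obtain ⟨t, ht1, ht2⟩ := (hfg_ne.and h0).exists
    exact ht1.1 ht2
  have hgne : ¬ g =ᶠ[atTop] (0:ℝ→ℝ) := by
    intro h0
    obtain ⟨t, ht1, ht2⟩ := (hfg_ne.and h0).exists
    exact ht1.2 ht2
  obtain ⟨fi, hfi, hffi⟩ := 𝓗.inv_mem f hf hfne
  obtain ⟨gi, hgi, hggi⟩ := 𝓗.inv_mem g hg hgne
  have huu : (fun t => deriv f t * fi t) ∈ 𝓗.carrier :=
    𝓗.mul_mem _ (𝓗.deriv_mem f hf) _ hfi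
  have hvv : (fun t => deriv g t * gi t) ∈ 𝓗.carrier :=
    𝓗.mul_mem _ (𝓗.deriv_mem g hg) _ hgi
  have hueq : ∀ᶠ t in atTop, deriv f t * fi t = deriv f t / f t := by
    filter_upwards [hffi] with t h1
    have h2' : f t * fi t = 1 := h1
    have h4 : fi t = (f t)⁻¹ := eq_inv_of_mul_eq_one_left (by rw [mul_comm]; exact h2')
    rw [h4, div_eq_mul_inv]
  have hveq : ∀ᶠ t in atTop, deriv g t * gi t = deriv g t / g t := by
    filter_upwards [hggi] with t h1
    have h2' : g t * gi t = 1 := h1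
    have h4 : gi t = (g t)⁻¹ := eq_inv_of_mul_eq_one_left (by rw [mul_comm]; exact h2')
    rw [h4, div_eq_mul_inv]
  set G : ℝ → ℝ := fun t => Real.log (f t) with hGdef
  set F : ℝ → ℝ := fun t => Real.log (g t) with hFdef
  have hGd : ∀ᶠ t in atTop, HasDerivAt G ((fun t => deriv f t * fi t) t) t := by
    filter_upwards [𝓗.eventually_smooth f hf, hfg_ne, hueq] with t h1 h2' h3
    have hfd : HasDerivAt f (deriv f t) t := ((h1 1).differentiableAt (by norm_num)).hasDerivAt
    have hl := hfd.log h2'.1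
    show HasDerivAt G (deriv f t * fi t) t
    rw [h3]
    exact hl
  have hFd : ∀ᶠ t in atTop, HasDerivAt F ((fun t => deriv g t * gi t) t) t := by
    filter_upwards [𝓗.eventually_smooth g hg, hfg_ne, hveq] with t h1 h2' h3
    have hgd : HasDerivAt g (deriv g t) t := ((h1 1).differentiableAt (by norm_num)).hasDerivAt
    have hl := hgd.log h2'.2
    show HasDerivAt F (deriv g t * gi t) t
    rw [h3]
    exact hl
  have habsG : (fun t => Real.log |f t|) = G := by
    funext t; rw [Real.log_abs]
  have habsF : (fun t => Real.log |g t|) = F := by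
    funext t; rw [Real.log_abs]
  have hGinf : Tendsto (fun t => |G t|) atTop atTop := by
    rcases h1f with htop | h0
    · have h5 : Tendsto (fun t => Real.log |f t|) atTop atTop :=
        Real.tendsto_log_atTop.comp htop
      rw [habsG] at h5
      exact tendsto_atTop_mono (fun t => le_abs_self (G t)) h5
    · have h5 : Tendsto (fun t => |f t|) atTop (nhdsWithin 0 (Set.Ioi 0)) := by
        rw [tendsto_nhdsWithin_iff]
        constructor
        · have := h0.abs
          simpa using this
        · filter_upwards [hfg_ne] with t ht
          exact abs_pos.mpr ht.1
      have h6 : Tendsto (fun t => Real.log |f t|) atTop atBot :=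
        Real.tendsto_log_nhdsGT_zero.comp h5
      rw [habsG] at h6
      exact tendsto_abs_atBot_atTop.comp h6
  have hFinf : Tendsto (fun t => |F t|) atTop atTop := by
    rcases h1g with htop | h0
    · have h5 : Tendsto (fun t => Real.log |g t|) atTop atTop :=
        Real.tendsto_log_atTop.comp htop
      rw [habsF] at h5
      exact tendsto_atTop_mono (fun t => le_abs_self (F t)) h5
    · have h5 : Tendsto (fun t => |g t|) atTop (nhdsWithin 0 (Set.Ioi 0)) := by
        rw [tendsto_nhdsWithin_iff]
        constructor
        · have := h0.abs
          simpa using this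
        · filter_upwards [hfg_ne] with t ht
          exact abs_pos.mpr ht.2
      have h6 : Tendsto (fun t => Real.log |g t|) atTop atBot :=
        Real.tendsto_log_nhdsGT_zero.comp h5
      rw [habsF] at h6
      exact tendsto_abs_atBot_atTop.comp h6
  obtain ⟨C, hCpos, t₀, ht₀, hC⟩ := h4
  have hGb : ∀ᶠ t in atTop, |G t| ≤ C * log2 t := by
    filter_upwards [eventually_ge_atTop t₀] with t ht
    have h5 : |Real.log (|f t|)| ≤ C * log2 t := hC t ht
    rw [Real.log_abs] at h5
    exact h5
  have hFb : ∀ᶠ t in atTop, |F t| ≤ (C + m) * log2 t := by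
    filter_upwards [hGb, h2.eventually (eventually_ge_atTop 1),
      h3.eventually (eventually_ge_atTop 1), hfg_ne,
      eventually_ge_atTop (Real.exp 1)] with t hGt h2t h3t hne ht
    have hlog1 : (1:ℝ) ≤ Real.log t := by
      have := Real.log_le_log (Real.exp_pos 1) ht
      rwa [Real.log_exp] at this
    have hL2nn : 0 ≤ log2 t := Real.log_nonneg hlog1
    have hfpos : 0 < |f t| := abs_pos.mpr hne.1
    have hgpos : 0 < |g t| := abs_pos.mpr hne.2
    have hlow : |f t| ≤ |g t| := (one_le_div hfpos).mp h2t
    have hup : |g t| ≤ |f t| * Real.log t ^ m := (one_le_div hgpos).mp h3t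
    have hFG1 : G t ≤ F t := by
      show Real.log (f t) ≤ Real.log (g t)
      rw [← Real.log_abs (f t), ← Real.log_abs (g t)]
      exact Real.log_le_log hfpos hlow
    have hFG2 : F t ≤ G t + m * log2 t := by
      show Real.log (g t) ≤ Real.log (f t) + m * log2 t
      rw [← Real.log_abs (g t), ← Real.log_abs (f t)]
      have hpow : (0:ℝ) < Real.log t ^ m := pow_pos (by linarith) m
      calc Real.log |g t| ≤ Real.log (|f t| * Real.log t ^ m) :=
            Real.log_le_log hgpos hup
        _ = Real.log |f t| + Real.log (Real.log t ^ m) := by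
            rw [Real.log_mul (ne_of_gt hfpos) (ne_of_gt hpow)]
        _ = Real.log |f t| + m * log2 t := by rw [Real.log_pow]; rfl
    have habs : |F t| ≤ |G t| + m * log2 t := by
      rw [abs_le]
      constructor
      · have h7 : -|G t| ≤ G t := neg_abs_le _
        have hmn : 0 ≤ (m:ℝ) * log2 t := by positivity
        linarith
      · have h7 : G t ≤ |G t| := le_abs_self _
        linarith
    calc |F t| ≤ |G t| + m * log2 t := habs
      _ ≤ C * log2 t + m * log2 t := by linarith
      _ = (C + m) * log2 t := by ring
  have main1 := tendsto_abs_ratio 𝓗 huu hvv hGd hFd hGinf hFinf hGb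
  have main2 := tendsto_abs_ratio 𝓗 hvv huu hFd hGd hFinf hGinf hFb
  constructor
  · show Tendsto _ atTop atTop
    apply main1.congr'
    filter_upwards [hueq, hveq] with t h1 h2'
    show |deriv g t * gi t| * log2 t ^ 2 / |deriv f t * fi t|
        = |deriv g t / g t| / (|deriv f t / f t| / log2 t ^ 2)
    rw [h1, h2', div_div_eq_mul_div]
  · show Tendsto _ atTop atTop
    apply main2.congr'
    filter_upwards [hueq, hveq] with t h1 h2'
    show |deriv f t * fi t| * log2 t ^ 2 / |deriv g t * gi t|
        = |deriv f t / f t| * log2 t ^ 2 / |deriv g t / g t|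
    rw [h1, h2']

end
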